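/- Define ξ(λ) = 1 − (1 + Γ(2−λ)^{−1/λ}/λ)·e^{−Γ(2−λ)^{−1/λ}} for λ ∈ (0,1]. Then ξ has a unique zero λ* in (0,1]; moreover ξ(λ) < 0 for all 0 < λ < λ* and ξ(λ) > 0 for all λ* < λ ≤ 1. -/

import Mathlib

open Real Set
open Filter Finset Topology

/-- `ξ(λ) = 1 − (1 + Γ(2−λ)^{−1/λ}/λ)·e^{−Γ(2−λ)^{−1/λ}}` for `λ ∈ (0,1]`. -/
noncomputable def xi (lam : ℝ) : ℝ :=
  1 - (1 + Real.Gamma (2 - lam) ^ (-(1 : ℝ) / lam) / lam) *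
        Real.exp (-(Real.Gamma (2 - lam) ^ (-(1 : ℝ) / lam)))

noncomputable def Ffun (x : ℝ) : ℝ := (Real.exp x - 1) / x
noncomputable def Fd (x : ℝ) : ℝ := (x * Real.exp x - Real.exp x + 1) / x ^ 2
noncomputable def Fd2 (x : ℝ) : ℝ :=
  (x ^ 2 * Real.exp x - 2 * x * Real.exp x + 2 * Real.exp x - 2) / x ^ 3

lemma hasDerivAt_Ffun {x : ℝ} (hx : x ≠ 0) : HasDerivAt Ffun (Fd x) x := by
  have h := (((Real.hasDerivAt_exp x).sub_const 1).div (hasDerivAt_id x) hx)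
  refine h.congr_deriv ?_
  unfold Fd id
  field_simp
  ring

lemma hasDerivAt_Fd {x : ℝ} (hx : x ≠ 0) : HasDerivAt Fd (Fd2 x) x := by
  have hnum : HasDerivAt (fun x : ℝ => x * Real.exp x - Real.exp x + 1)
      (x * Real.exp x) x := by
    have h := (((hasDerivAt_id x).mul (Real.hasDerivAt_exp x)).sub
      (Real.hasDerivAt_exp x)).add_const 1
    refine h.congr_deriv ?_
    simp [id]
  have hden : HasDerivAt (fun x : ℝ => x ^ 2) (2 * x ^ (2-1)) x := hasDerivAt_pow 2 x
  have h := hnum.div hden (pow_ne_zero 2 hx)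
  refine h.congr_deriv ?_
  unfold Fd2
  field_simp
  ring

lemma exp_quad {x : ℝ} (hx : 0 ≤ x) : 1 + x + x ^ 2 / 2 ≤ Real.exp x := by
  have h := Real.sum_le_exp_of_nonneg hx 3
  norm_num [Finset.sum_range_succ] at h
  linarith

lemma Fd2_nonneg {x : ℝ} (hx : 0 < x) : 0 ≤ Fd2 x := by
  unfold Fd2
  apply div_nonneg _ (by positivity)
  nlinarith [exp_quad hx.le, sq_nonneg x, sq_nonneg (x-1)]

lemma Fconv : ConvexOn ℝ (Ioi 0) Ffun := by
  have hFd : ∀ x ∈ Ioi (0:ℝ), deriv Ffun x = Fd x := fun x hx =>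
    (hasDerivAt_Ffun (ne_of_gt hx)).deriv
  refine convexOn_of_deriv2_nonneg (convex_Ioi 0) ?_ ?_ ?_ ?_
  · intro x hx
    exact (hasDerivAt_Ffun (ne_of_gt hx)).differentiableAt.continuousAt.continuousWithinAt
  · intro x hx
    rw [interior_Ioi] at hx
    exact (hasDerivAt_Ffun (ne_of_gt hx)).differentiableAt.differentiableWithinAt
  · intro x hx
    rw [interior_Ioi] at hx
    have : deriv Ffun =ᶠ[nhds x] Fd :=
      Filter.eventuallyEq_of_mem (Ioi_mem_nhds hx) hFd
    exact ((hasDerivAt_Fd (ne_of_gt hx)).differentiableAt.congr_of_eventuallyEq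
      this).differentiableWithinAt
  · intro x hx
    rw [interior_Ioi] at hx
    have hev : deriv Ffun =ᶠ[nhds x] Fd :=
      Filter.eventuallyEq_of_mem (Ioi_mem_nhds hx) hFd
    have : deriv (deriv Ffun) x = Fd2 x := by
      rw [hev.deriv_eq]
      exact (hasDerivAt_Fd (ne_of_gt hx)).deriv
    have h2 : deriv^[2] Ffun x = deriv (deriv Ffun) x := by
      simp [Function.iterate_succ_apply']
    rw [h2, this]
    exact Fd2_nonneg hx

noncomputable def piece (j : ℕ) (x : ℝ) : ℝ :=
  x ^ 2 / (2 * ((j : ℝ) + 1) ^ 2) + Real.log (x + j)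

noncomputable def pieceD (j : ℕ) (x : ℝ) : ℝ := x / ((j : ℝ) + 1) ^ 2 + 1 / (x + j)

lemma hasDerivAt_piece (j : ℕ) {x : ℝ} (hx : 0 < x) :
    HasDerivAt (piece j) (pieceD j x) x := by
  have hxj : x + (j : ℝ) ≠ 0 := by positivity
  have h1 : HasDerivAt (fun x : ℝ => x ^ 2 / (2 * ((j : ℝ) + 1) ^ 2))
      (2 * x ^ (2 - 1) / (2 * ((j : ℝ) + 1) ^ 2)) x := (hasDerivAt_pow 2 x).div_const _
  have h2 : HasDerivAt (fun x : ℝ => Real.log (x + j)) (1 / (x + j)) x := by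
    have := ((hasDerivAt_id x).add_const (j : ℝ)).log hxj
    simpa using this
  have := h1.add h2
  refine this.congr_deriv ?_
  unfold pieceD
  have : ((j : ℝ) + 1) ^ 2 ≠ 0 := by positivity
  field_simp
  ring

lemma hasDerivAt_pieceD (j : ℕ) {x : ℝ} (hx : 0 < x) :
    HasDerivAt (pieceD j) (1 / ((j : ℝ) + 1) ^ 2 - 1 / (x + j) ^ 2) x := by
  have hxj : x + (j : ℝ) ≠ 0 := by positivity
  have h1 : HasDerivAt (fun x : ℝ => x / ((j : ℝ) + 1) ^ 2)
      (1 / ((j : ℝ) + 1) ^ 2) x := by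
    have := (hasDerivAt_id x).div_const (((j : ℝ) + 1) ^ 2)
    simpa using this
  have h2 : HasDerivAt (fun x : ℝ => 1 / (x + j)) (-1 / (x + j) ^ 2) x := by
    have := ((hasDerivAt_id x).add_const (j : ℝ)).inv hxj
    simpa [one_div, Pi.inv_def] using this
  have := h1.add h2
  refine this.congr_deriv ?_
  ring

lemma piece_convex (j : ℕ) : ConvexOn ℝ (Ici 1) (piece j) := by
  have hD : ∀ x ∈ Ioi (0:ℝ), deriv (piece j) x = pieceD j x := fun x hx =>
    (hasDerivAt_piece j hx).deriv
  refine convexOn_of_deriv2_nonneg (convex_Ici 1) ?_ ?_ ?_ ?_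
  · intro x hx
    have hx0 : (0:ℝ) < x := lt_of_lt_of_le one_pos hx
    exact (hasDerivAt_piece j hx0).differentiableAt.continuousAt.continuousWithinAt
  · intro x hx
    rw [interior_Ici] at hx
    exact (hasDerivAt_piece j (lt_trans one_pos hx)).differentiableAt.differentiableWithinAt
  · intro x hx
    rw [interior_Ici] at hx
    have hx0 : (0:ℝ) < x := lt_trans one_pos hx
    have hev : deriv (piece j) =ᶠ[nhds x] pieceD j :=
      Filter.eventuallyEq_of_mem (Ioi_mem_nhds hx0) hD
    exact ((hasDerivAt_pieceD j hx0).differentiableAt.congr_of_eventuallyEq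
      hev).differentiableWithinAt
  · intro x hx
    rw [interior_Ici] at hx
    have hx0 : (0:ℝ) < x := lt_trans one_pos hx
    have hev : deriv (piece j) =ᶠ[nhds x] pieceD j :=
      Filter.eventuallyEq_of_mem (Ioi_mem_nhds hx0) hD
    have h2 : deriv^[2] (piece j) x = deriv (deriv (piece j)) x := by
      simp [Function.iterate_succ_apply']
    rw [h2, hev.deriv_eq, (hasDerivAt_pieceD j hx0).deriv]
    have hj1 : (0:ℝ) < ((j:ℝ)+1)^2 := by positivity
    have hle : ((j:ℝ)+1)^2 ≤ (x + j)^2 := by nlinarith [(mem_Ioi.mp hx).le, Nat.cast_nonneg (α := ℝ) j]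
    have := one_div_le_one_div_of_le hj1 hle
    linarith

lemma basel_partial (m : ℕ) : ∑ j ∈ Finset.range m, (1:ℝ)/((j:ℝ)+1)^2 ≤ π^2/6 := by
  have hs := hasSum_zeta_two
  have := sum_le_hasSum ((Finset.range m).image (· + 1))
    (fun n _ => by positivity) hs
  refine le_trans ?_ this
  rw [Finset.sum_image (by intro a _ b _ h; simp at h; omega)]
  apply le_of_eq
  apply Finset.sum_congr rfl
  intro j _
  push_cast
  norm_num

lemma sum_piece_convex (m : ℕ) :
    ConvexOn ℝ (Ici 1) (fun x => ∑ j ∈ Finset.range m, piece j x) := by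
  induction m with
  | zero => simpa using convexOn_const (0:ℝ) (convex_Ici 1)
  | succ n ih =>
    have h := ih.add (piece_convex n)
    simp only [Finset.sum_range_succ]
    exact h

lemma affine_convex (a b : ℝ) : ConvexOn ℝ (Ici (1:ℝ)) (fun x => a * x + b) := by
  refine ⟨convex_Ici 1, fun x _ y _ s t hs ht hst => ?_⟩
  simp only [smul_eq_mul]
  apply le_of_eq
  linear_combination (-b) * hst

lemma sq_convex {c : ℝ} (hc : 0 ≤ c) : ConvexOn ℝ (Ici (1:ℝ)) (fun x => c * x ^ 2) := by
  have h : ConvexOn ℝ (univ : Set ℝ) (fun x : ℝ => x ^ 2) :=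
    Even.convexOn_pow (by norm_num)
  have := (h.smul hc).subset (subset_univ _) (convex_Ici 1)
  simpa [smul_eq_mul] using this

noncomputable def Pfun (n : ℕ) (x : ℝ) : ℝ :=
  π ^ 2 / 12 * x ^ 2 -
    (x * Real.log n + Real.log (n.factorial) - ∑ j ∈ Finset.range (n + 1), Real.log (x + j))

lemma Pfun_convex (n : ℕ) : ConvexOn ℝ (Ici 1) (Pfun n) := by
  have hc : 0 ≤ π ^ 2 / 12 - ∑ j ∈ Finset.range (n + 1), 1 / (2 * ((j:ℝ) + 1) ^ 2) := by
    have h := basel_partial (n + 1)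
    have : ∑ j ∈ Finset.range (n + 1), 1 / (2 * ((j:ℝ) + 1) ^ 2)
        = (∑ j ∈ Finset.range (n + 1), 1 / ((j:ℝ) + 1) ^ 2) / 2 := by
      rw [Finset.sum_div]
      refine Finset.sum_congr rfl fun j _ => ?_
      rw [one_div (2*((j:ℝ)+1)^2), mul_inv]
      ring
    rw [this]
    linarith
  have h := ((sum_piece_convex (n + 1)).add (sq_convex hc)).add
    (affine_convex (-Real.log n) (-Real.log (n.factorial)))
  refine (congrArg (ConvexOn ℝ (Ici 1)) ?_).mpr h
  funext x
  unfold Pfun piece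
  simp only [Pi.add_apply]
  rw [Finset.sum_add_distrib]
  have : ∑ j ∈ Finset.range (n + 1), x ^ 2 / (2 * ((j:ℝ) + 1) ^ 2)
      = x ^ 2 * ∑ j ∈ Finset.range (n + 1), 1 / (2 * ((j:ℝ) + 1) ^ 2) := by
    rw [Finset.mul_sum]
    exact Finset.sum_congr rfl fun j _ => by ring
  rw [this]
  ring

lemma tendsto_Pfun {x : ℝ} (hx : 0 < x) :
    Tendsto (fun n => Pfun n x) atTop (𝓝 (π ^ 2 / 12 * x ^ 2 - Real.log (Real.Gamma x))) := by
  have h1 : Tendsto (fun n => Real.log (Real.GammaSeq x n)) atTop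
      (𝓝 (Real.log (Real.Gamma x))) :=
    ((Real.continuousAt_log (Real.Gamma_pos_of_pos hx).ne').tendsto).comp
      (Real.GammaSeq_tendsto_Gamma x)
  have h2 : Tendsto (fun n : ℕ => π ^ 2 / 12 * x ^ 2 - Real.log (Real.GammaSeq x n)) atTop
      (𝓝 (π ^ 2 / 12 * x ^ 2 - Real.log (Real.Gamma x))) := tendsto_const_nhds.sub h1
  refine h2.congr' ?_
  filter_upwards [eventually_ge_atTop 1] with n hn
  have hn0 : (0:ℝ) < (n:ℝ) := by exact_mod_cast hn
  have hfact : (0:ℝ) < (n.factorial : ℝ) := by exact_mod_cast Nat.factorial_pos n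
  have hprod : ∀ j ∈ Finset.range (n + 1), x + (j:ℝ) ≠ 0 := by
    intro j _
    positivity
  have hrw : Real.log (Real.GammaSeq x n)
      = x * Real.log n + Real.log (n.factorial) - ∑ j ∈ Finset.range (n + 1), Real.log (x + j) := by
    unfold Real.GammaSeq
    rw [Real.log_div (by positivity) (Finset.prod_ne_zero_iff.mpr hprod),
      Real.log_mul (by positivity) hfact.ne', Real.log_rpow hn0,
      Real.log_prod hprod]
  rw [Pfun, hrw]

lemma Qconv : ConvexOn ℝ (Ici 1)
    (fun x => π ^ 2 / 12 * x ^ 2 - Real.log (Real.Gamma x)) := by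
  refine ⟨convex_Ici 1, fun x hx y hy a b ha hb hab => ?_⟩
  have hmem : a • x + b • y ∈ Ici (1:ℝ) := (convex_Ici 1) hx hy ha hb hab
  have hx0 : (0:ℝ) < x := lt_of_lt_of_le one_pos hx
  have hy0 : (0:ℝ) < y := lt_of_lt_of_le one_pos hy
  have hm0 : (0:ℝ) < a • x + b • y := lt_of_lt_of_le one_pos hmem
  refine le_of_tendsto_of_tendsto' (tendsto_Pfun hm0)
    (((tendsto_Pfun hx0).const_mul a).add ((tendsto_Pfun hy0).const_mul b)) ?_
  intro n
  have := (Pfun_convex n).2 hx hy ha hb hab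
  simpa [smul_eq_mul] using this

noncomputable def hfun (l : ℝ) : ℝ := -Real.log (Real.Gamma (2 - l)) / l
noncomputable def Ufun (l : ℝ) : ℝ := Real.exp (hfun l)
noncomputable def phi (l : ℝ) : ℝ := l - 1 / Ffun (Ufun l)

lemma Gamma2l_pos {l : ℝ} (hl : l ∈ Ioc (0:ℝ) 1) : 0 < Real.Gamma (2 - l) :=
  Real.Gamma_pos_of_pos (by linarith [hl.2])

lemma logGamma_slope {l : ℝ} (hl : l ≠ 0) :
    ((Real.log ∘ Real.Gamma) (2 - l) - (Real.log ∘ Real.Gamma) 2) / ((2 - l) - 2)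
      = hfun l := by
  simp only [Function.comp_apply, Real.Gamma_two, Real.log_one, sub_zero]
  rw [show ((2:ℝ) - l) - 2 = -l by ring]
  unfold hfun
  rw [div_neg, neg_div]

lemma hfun_nonneg {l : ℝ} (hl : l ∈ Ioc (0:ℝ) 1) : 0 ≤ hfun l := by
  have key := Real.convexOn_log_Gamma.secant_mono (a := 2) (x := 1) (y := 2 - l)
    (by norm_num) (by norm_num) (by simp; linarith [hl.2]) (by norm_num)
    (by intro h; have := hl.1; simp at h; linarith) (by linarith [hl.2])
  rw [logGamma_slope hl.1.ne'] at key
  simp only [Function.comp_apply, Real.Gamma_two, Real.Gamma_one, Real.log_one] at key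
  norm_num at key
  exact key

lemma Gamma_five_half : Real.Gamma (5/2) = 3/4 * Real.sqrt π := by
  rw [show (5/2:ℝ) = 3/2 + 1 by norm_num, Real.Gamma_add_one (by norm_num),
    show (3/2:ℝ) = 1/2 + 1 by norm_num, Real.Gamma_add_one (by norm_num),
    Real.Gamma_one_half_eq]
  ring

lemma hfun_le {l : ℝ} (hl : l ∈ Ioc (0:ℝ) 1) : hfun l ≤ 2 * Real.log (Real.Gamma (5/2)) := by
  have key := Real.convexOn_log_Gamma.secant_mono (a := 2) (x := 2 - l) (y := 5/2)
    (by norm_num) (by simp; linarith [hl.2]) (by norm_num)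
    (by intro h; have := hl.1; simp at h; linarith) (by norm_num)
    (by linarith [hl.1])
  rw [logGamma_slope hl.1.ne'] at key
  simp only [Function.comp_apply, Real.Gamma_two, Real.log_one] at key
  calc hfun l ≤ (Real.log (Real.Gamma (5/2)) - 0) / (5/2 - 2) := key
    _ = 2 * Real.log (Real.Gamma (5/2)) := by norm_num; ring

lemma Ufun_ge_one {l : ℝ} (hl : l ∈ Ioc (0:ℝ) 1) : 1 ≤ Ufun l := by
  have := hfun_nonneg hl
  calc (1:ℝ) = Real.exp 0 := Real.exp_zero.symm
    _ ≤ Ufun l := Real.exp_le_exp.mpr this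

lemma Ufun_le {l : ℝ} (hl : l ∈ Ioc (0:ℝ) 1) : Ufun l ≤ 9 * π / 16 := by
  have h1 := hfun_le hl
  have hG : (0:ℝ) < Real.Gamma (5/2) := Real.Gamma_pos_of_pos (by norm_num)
  have : Ufun l ≤ Real.exp (2 * Real.log (Real.Gamma (5/2))) := Real.exp_le_exp.mpr h1
  calc Ufun l ≤ Real.exp (2 * Real.log (Real.Gamma (5/2))) := this
    _ = Real.Gamma (5/2) ^ 2 := by
        rw [mul_comm, Real.exp_mul, Real.exp_log hG]
        norm_num
    _ = 9 * π / 16 := by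
        rw [Gamma_five_half]
        rw [mul_pow]
        rw [Real.sq_sqrt Real.pi_pos.le]
        ring

lemma hfun_anti {l1 l2 : ℝ} (h1 : l1 ∈ Ioc (0:ℝ) 1) (h2 : l2 ∈ Ioc (0:ℝ) 1)
    (hle : l1 ≤ l2) : hfun l2 ≤ hfun l1 := by
  have key := Real.convexOn_log_Gamma.secant_mono (a := 2) (x := 2 - l2) (y := 2 - l1)
    (by norm_num) (by simp; linarith [h2.2]) (by simp; linarith [h1.2])
    (by intro h; have := h2.1; simp at h; linarith)
    (by intro h; have := h1.1; simp at h; linarith) (by linarith)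
  rw [logGamma_slope h1.1.ne', logGamma_slope h2.1.ne'] at key
  exact key

lemma hfun_lip {l1 l2 : ℝ} (h1 : l1 ∈ Ioc (0:ℝ) 1) (h2 : l2 ∈ Ioc (0:ℝ) 1)
    (hle : l1 ≤ l2) : hfun l1 - hfun l2 ≤ π ^ 2 / 12 * (l2 - l1) := by
  have key := Qconv.secant_mono (a := 2) (x := 2 - l2) (y := 2 - l1)
    (by norm_num) (by simp only [Set.mem_Ici]; linarith [h2.2]) (by simp only [Set.mem_Ici]; linarith [h1.2])
    (by intro h; have := h2.1; simp at h; linarith)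
    (by intro h; have := h1.1; simp at h; linarith) (by linarith)
  have hid : ∀ l : ℝ, l ≠ 0 →
      ((fun x => π ^ 2 / 12 * x ^ 2 - Real.log (Real.Gamma x)) (2 - l)
        - (fun x => π ^ 2 / 12 * x ^ 2 - Real.log (Real.Gamma x)) 2) / ((2 - l) - 2)
      = π ^ 2 / 12 * (4 - l) - hfun l := by
    intro l hl
    simp only [Real.Gamma_two, Real.log_one]
    unfold hfun
    rw [show ((2:ℝ) - l) - 2 = -l by ring]
    field_simp
    ring
  rw [hid l2 h2.1.ne', hid l1 h1.1.ne'] at key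
  linarith

lemma Ffun_ge {u : ℝ} (hu : 1 ≤ u) : Real.exp 1 - 1 ≤ Ffun u := by
  have key := convexOn_exp.secant_mono (a := 0) (x := 1) (y := u)
    (mem_univ _) (mem_univ _) (mem_univ _) (by norm_num) (by linarith : (0:ℝ) < u).ne' hu
  simpa [Real.exp_zero, Ffun] using key

lemma Ffun_mono {a b : ℝ} (ha : 0 < a) (hab : a ≤ b) : Ffun a ≤ Ffun b := by
  have key := convexOn_exp.secant_mono (a := 0) (x := a) (y := b)
    (mem_univ _) (mem_univ _) (mem_univ _) ha.ne' (lt_of_lt_of_le ha hab).ne' hab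
  simpa [Real.exp_zero, Ffun] using key

lemma exp_two_le : Real.exp 2 ≤ 7.389057 := by
  have h : Real.exp 2 = Real.exp 1 * Real.exp 1 := by
    rw [← Real.exp_add]; norm_num
  have := Real.exp_one_lt_d9
  nlinarith [Real.exp_pos 1]

lemma exp_nine_fifth_ge : (6.034:ℝ) ≤ Real.exp (9/5) := by
  have h := Real.sum_le_exp_of_nonneg (by norm_num : (0:ℝ) ≤ 9/5) 7
  refine le_trans ?_ h
  norm_num [Finset.sum_range_succ, Nat.factorial]

lemma exp_nine_fifth_le : Real.exp (9/5) ≤ 6.16 := by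
  have h1 : Real.exp (9/5) = Real.exp 2 / Real.exp (1/5) := by
    rw [← Real.exp_sub]; norm_num
  have h2 : (1.2:ℝ) ≤ Real.exp (1/5) := by
    have := Real.add_one_le_exp (1/5 : ℝ)
    linarith
  rw [h1]
  have h3 := exp_two_le
  rw [div_le_iff₀ (by positivity)]
  nlinarith

lemma pi_cube_le : 9 * π / 16 * (π ^ 2 / 12) ≤ 1.4535 := by
  have hp := Real.pi_lt_d6
  have h3 : π ^ 3 ≤ 3.141593 ^ 3 := by
    apply pow_le_pow_left₀ Real.pi_pos.le hp.le
  nlinarith [Real.pi_pos]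

lemma umax_le : 9 * π / 16 ≤ 1.76715 := by
  have := Real.pi_lt_d6
  nlinarith

set_option maxHeartbeats 1000000 in
lemma phi_strictMonoOn : ∀ l1 l2 : ℝ, 0 < l1 → l1 < l2 → l2 ≤ 1 → phi l1 < phi l2 := by
  intro l1 l2 hl1 hl12 hl2
  have m1 : l1 ∈ Ioc (0:ℝ) 1 := ⟨hl1, by linarith⟩
  have m2 : l2 ∈ Ioc (0:ℝ) 1 := ⟨by linarith, hl2⟩
  set u1 := Ufun l1 with hu1def
  set u2 := Ufun l2 with hu2def
  have hu2_1 : 1 ≤ u2 := Ufun_ge_one m2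
  have hu1_1 : 1 ≤ u1 := Ufun_ge_one m1
  have hu21 : u2 ≤ u1 := Real.exp_le_exp.mpr (hfun_anti m1 m2 hl12.le)
  have hu1_hi : u1 ≤ 1.76715 := le_trans (Ufun_le m1) umax_le
  have hu2_hi : u2 ≤ 1.76715 := le_trans hu21 hu1_hi
  have hδ : (0:ℝ) ≤ l2 - l1 := by linarith
  -- step 1 : u1 - u2 ≤ 1.4535 * (l2 - l1)
  have hdiff : u1 - u2 ≤ 1.4535 * (l2 - l1) := by
    have hh : hfun l1 - hfun l2 ≤ π ^ 2 / 12 * (l2 - l1) := hfun_lip m1 m2 hl12.le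
    have hh0 : 0 ≤ hfun l1 - hfun l2 := by
      have := hfun_anti m1 m2 hl12.le; linarith
    have hexp : u1 - u2 ≤ u1 * (hfun l1 - hfun l2) := by
      have hle := Real.add_one_le_exp (hfun l2 - hfun l1)
      have h2 : Real.exp (hfun l2 - hfun l1) * Real.exp (hfun l1) = u2 := by
        rw [← Real.exp_add]; congr 1; ring
      have hu1exp : u1 = Real.exp (hfun l1) := rfl
      have h3 : (hfun l2 - hfun l1 + 1) * u1 ≤ u2 := by
        rw [hu1exp, ← h2]
        exact mul_le_mul_of_nonneg_right hle (Real.exp_pos _).le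
      nlinarith [h3]
    have humax : u1 ≤ 9 * π / 16 := Ufun_le m1
    have h4 : u1 * (hfun l1 - hfun l2) ≤ (9 * π / 16) * (π ^ 2 / 12 * (l2 - l1)) :=
      mul_le_mul humax hh hh0 (by positivity)
    have h5 : (9 * π / 16) * (π ^ 2 / 12 * (l2 - l1))
        = (9 * π / 16 * (π ^ 2 / 12)) * (l2 - l1) := by ring
    have h6 : (9 * π / 16 * (π ^ 2 / 12)) * (l2 - l1) ≤ 1.4535 * (l2 - l1) :=
      mul_le_mul_of_nonneg_right pi_cube_le hδ
    linarith
  -- step 2 : Ffun u1 - Ffun u2 ≤ 1.9894 * (u1 - u2)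
  have hFd : Ffun u1 - Ffun u2 ≤ 1.9894 * (u1 - u2) := by
    rcases eq_or_lt_of_le hu21 with heq | hlt
    · rw [heq]; simp
    · have hu2pos : (0:ℝ) < u2 := by linarith
      have h2u2 : (0:ℝ) < 2 - u2 := by linarith
      have s1 := Fconv.secant_mono (a := u2) (x := u1) (y := 2)
        (by simp only [Set.mem_Ioi]; linarith) (by simp only [Set.mem_Ioi]; linarith)
        (by simp only [Set.mem_Ioi]; norm_num) hlt.ne'
        (by intro h; rw [← h] at hu2_hi; norm_num at hu2_hi) (by linarith)
      have s2 := Fconv.secant_mono (a := 2) (x := u2) (y := 9/5)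
        (by simp only [Set.mem_Ioi]; norm_num) (by simp only [Set.mem_Ioi]; linarith)
        (by simp only [Set.mem_Ioi]; norm_num)
        (by intro h; rw [h] at hu2_hi; norm_num at hu2_hi)
        (by norm_num) (by linarith)
      have e2 : (Ffun (9/5) - Ffun 2) / ((9:ℝ)/5 - 2) = 5 * (Ffun 2 - Ffun (9/5)) := by
        rw [div_eq_iff (by norm_num : ((9:ℝ)/5 - 2) ≠ 0)]; ring
      have e1 : (Ffun u2 - Ffun 2) / (u2 - 2) = (Ffun 2 - Ffun u2) / (2 - u2) := by
        rw [← neg_sub (Ffun 2) (Ffun u2), ← neg_sub (2:ℝ) u2, neg_div_neg_eq]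
      rw [e2, e1] at s2
      have hF2 : Ffun 2 ≤ 3.1945285 := by
        unfold Ffun
        rw [div_le_iff₀ (by norm_num : (0:ℝ) < 2)]
        have := exp_two_le
        linarith
      have hF95 : (2.7966666:ℝ) ≤ Ffun (9/5) := by
        unfold Ffun
        rw [le_div_iff₀ (by norm_num : (0:ℝ) < (9:ℝ)/5)]
        have := exp_nine_fifth_ge
        linarith
      have hS : (Ffun 2 - Ffun u2) / (2 - u2) ≤ 1.9894 :=
        le_trans s2 (by linarith)
      have hS' : Ffun 2 - Ffun u2 ≤ 1.9894 * (2 - u2) := by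
        rw [div_le_iff₀ h2u2] at hS; linarith
      rw [div_le_div_iff₀ (by linarith : (0:ℝ) < u1 - u2) h2u2] at s1
      have hmul : (Ffun 2 - Ffun u2) * (u1 - u2) ≤ 1.9894 * (2 - u2) * (u1 - u2) :=
        mul_le_mul_of_nonneg_right hS' (by linarith)
      have hfin : (Ffun u1 - Ffun u2) * (2 - u2) ≤ (1.9894 * (u1 - u2)) * (2 - u2) := by
        calc (Ffun u1 - Ffun u2) * (2 - u2) ≤ (Ffun 2 - Ffun u2) * (u1 - u2) := s1
          _ ≤ 1.9894 * (2 - u2) * (u1 - u2) := hmul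
          _ = (1.9894 * (u1 - u2)) * (2 - u2) := by ring
      exact le_of_mul_le_mul_right hfin h2u2
  -- step 3 : product lower bound
  have he1 : (1.7182818:ℝ) ≤ Real.exp 1 - 1 := by
    have := Real.exp_one_gt_d9; linarith
  have hFu1 : (1.7182818:ℝ) ≤ Ffun u1 := le_trans he1 (Ffun_ge hu1_1)
  have hFu2 : (1.7182818:ℝ) ≤ Ffun u2 := le_trans he1 (Ffun_ge hu2_1)
  have hF1pos : (0:ℝ) < Ffun u1 := by linarith
  have hF2pos : (0:ℝ) < Ffun u2 := by linarith
  have hprod' : (2.9524:ℝ) ≤ Ffun u2 * Ffun u1 := by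
    have := mul_le_mul hFu2 hFu1 (by norm_num) (by linarith)
    linarith
  have hFmono : Ffun u2 ≤ Ffun u1 := Ffun_mono (by linarith) hu21
  -- combine
  have hkey : 1 / Ffun u2 - 1 / Ffun u1 < l2 - l1 := by
    have heq : 1 / Ffun u2 - 1 / Ffun u1 = (Ffun u1 - Ffun u2) / (Ffun u2 * Ffun u1) := by
      rw [div_sub_div 1 1 hF2pos.ne' hF1pos.ne']
      ring_nf
    rw [heq]
    have h29 : (0:ℝ) < 2.9524 := by norm_num
    have hnum0 : 0 ≤ Ffun u1 - Ffun u2 := by linarith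
    calc (Ffun u1 - Ffun u2) / (Ffun u2 * Ffun u1)
        ≤ (Ffun u1 - Ffun u2) / 2.9524 :=
          div_le_div_of_nonneg_left hnum0 h29 hprod'
      _ ≤ (1.9894 * (1.4535 * (l2 - l1))) / 2.9524 := by
          apply (div_le_div_iff_of_pos_right h29).mpr
          linarith [mul_le_mul_of_nonneg_left hdiff (by norm_num : (0:ℝ) ≤ 1.9894)]
      _ < l2 - l1 := by
          rw [div_lt_iff₀ h29]
          linarith
  unfold phi
  linarith

lemma Ffun_pos {l : ℝ} (hl : l ∈ Ioc (0:ℝ) 1) : 0 < Ffun (Ufun l) := by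
  have := Ffun_ge (Ufun_ge_one hl)
  have := Real.exp_one_gt_d9
  linarith

lemma phi_one_pos : 0 < phi 1 := by
  have hU : Ufun 1 = 1 := by
    unfold Ufun hfun
    norm_num [Real.Gamma_one]
  unfold phi
  rw [hU]
  have h1 : (1.7182818:ℝ) ≤ Ffun 1 := by
    have := Ffun_ge (le_refl (1:ℝ))
    have := Real.exp_one_gt_d9
    linarith
  have h2 : 1 / Ffun 1 < 1 := by
    rw [div_lt_one (by linarith)]
    linarith
  linarith

lemma phi_third_neg : phi (1/3) < 0 := by
  have m : (1/3:ℝ) ∈ Ioc (0:ℝ) 1 := by norm_num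
  have hu1 : 1 ≤ Ufun (1/3) := Ufun_ge_one m
  have hu_hi : Ufun (1/3) ≤ 1.76715 := le_trans (Ufun_le m) umax_le
  have hF : Ffun (Ufun (1/3)) ≤ Ffun (9/5) := Ffun_mono (by linarith) (by linarith)
  have hF95 : Ffun (9/5) ≤ 2.8667 := by
    unfold Ffun
    rw [div_le_iff₀ (by norm_num : (0:ℝ) < (9:ℝ)/5)]
    have := exp_nine_fifth_le
    linarith
  have hFpos := Ffun_pos m
  have : (1:ℝ)/3 < 1 / Ffun (Ufun (1/3)) := by
    rw [div_lt_div_iff₀ (by norm_num) hFpos]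
    linarith
  unfold phi
  linarith

lemma Ufun_continuousOn : ContinuousOn Ufun (Icc (1/3 : ℝ) 1) := by
  apply Real.continuous_exp.comp_continuousOn
  unfold hfun
  apply ContinuousOn.div
  · apply ContinuousOn.neg
    apply ContinuousOn.log
    · intro l hl
      have h2l : (0:ℝ) < 2 - l := by
        have := hl.2; simp only [Set.mem_Icc] at hl; linarith [hl.2]
      have hc : ContinuousAt Real.Gamma (2 - l) := by
        refine (Real.differentiableAt_Gamma ?_).continuousAt
        intro m
        have : (0:ℝ) ≤ m := Nat.cast_nonneg m
        intro h
        rw [h] at h2l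
        linarith
      exact (hc.comp ((continuous_const.sub continuous_id).continuousAt)).continuousWithinAt
    · intro l hl
      simp only [Set.mem_Icc] at hl
      exact (Real.Gamma_pos_of_pos (by linarith [hl.2])).ne'
  · exact continuousOn_id
  · intro l hl
    simp only [Set.mem_Icc] at hl
    intro h
    rw [h] at hl
    norm_num at hl

lemma phi_continuousOn : ContinuousOn phi (Icc (1/3 : ℝ) 1) := by
  have hsub : Icc (1/3 : ℝ) 1 ⊆ Ioc (0:ℝ) 1 := by
    intro x hx
    simp only [Set.mem_Icc] at hx
    exact ⟨by linarith [hx.1], hx.2⟩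
  have hU := Ufun_continuousOn
  have hexpU : ContinuousOn (fun l => Real.exp (Ufun l)) (Icc (1/3 : ℝ) 1) :=
    Real.continuous_exp.comp_continuousOn hU
  have hFU : ContinuousOn (fun l => Ffun (Ufun l)) (Icc (1/3 : ℝ) 1) := by
    unfold Ffun
    apply ContinuousOn.div (hexpU.sub continuousOn_const) hU
    intro l hl
    have := Ufun_ge_one (hsub hl)
    intro h; rw [h] at this; linarith
  apply ContinuousOn.sub continuousOn_id
  apply ContinuousOn.div continuousOn_const hFU
  intro l hl
  exact (Ffun_pos (hsub hl)).ne'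

lemma rpow_eq_Ufun {l : ℝ} (hl : l ∈ Ioc (0:ℝ) 1) :
    Real.Gamma (2 - l) ^ (-(1 : ℝ) / l) = Ufun l := by
  rw [Real.rpow_def_of_pos (Gamma2l_pos hl)]
  unfold Ufun hfun
  congr 1
  ring

lemma xi_eq_phi {l : ℝ} (hl : l ∈ Ioc (0:ℝ) 1) :
    xi l = phi l * ((Real.exp (Ufun l) - 1) * Real.exp (-(Ufun l)) / l) := by
  unfold xi
  rw [rpow_eq_Ufun hl]
  have hu1 : 1 ≤ Ufun l := Ufun_ge_one hl
  have hune : Ufun l ≠ 0 := by linarith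
  have hexpne : Real.exp (Ufun l) - 1 ≠ 0 := by
    have : (1:ℝ) < Real.exp (Ufun l) := by
      rw [← Real.exp_zero]
      exact Real.exp_lt_exp.mpr (by linarith)
    linarith
  have hlne : l ≠ 0 := hl.1.ne'
  unfold phi Ffun
  rw [Real.exp_neg]
  rw [one_div_div]
  field_simp
  ring

lemma pos_factor {l : ℝ} (hl : l ∈ Ioc (0:ℝ) 1) :
    0 < (Real.exp (Ufun l) - 1) * Real.exp (-(Ufun l)) / l := by
  have hu1 : 1 ≤ Ufun l := Ufun_ge_one hl
  have : (1:ℝ) < Real.exp (Ufun l) := by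
    rw [← Real.exp_zero]
    exact Real.exp_lt_exp.mpr (by linarith)
  apply div_pos (mul_pos (by linarith) (Real.exp_pos _)) hl.1

/-- The quantity `ξ(λ)` has a unique zero `λ*` in `(0,1]`; moreover `ξ(λ) < 0` for
`0 < λ < λ*` and `ξ(λ) > 0` for `λ* < λ ≤ 1`. -/
theorem xi_unique_zero :
    ∃ lamstar : ℝ, lamstar ∈ Set.Ioc (0 : ℝ) 1 ∧ xi lamstar = 0 ∧
      (∀ lam ∈ Set.Ioc (0 : ℝ) 1, xi lam = 0 → lam = lamstar) ∧
      (∀ lam : ℝ, 0 < lam → lam < lamstar → xi lam < 0) ∧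
      (∀ lam : ℝ, lamstar < lam → lam ≤ 1 → 0 < xi lam) := by
  have hivt := intermediate_value_Ioo (by norm_num : (1/3:ℝ) ≤ 1) phi_continuousOn
  have h0mem : (0:ℝ) ∈ Ioo (phi (1/3)) (phi 1) := ⟨phi_third_neg, phi_one_pos⟩
  obtain ⟨ls, hlsmem, hlseq⟩ := hivt h0mem
  have hls1 : ls ∈ Ioc (0:ℝ) 1 := ⟨by have := hlsmem.1; linarith, le_of_lt hlsmem.2⟩
  refine ⟨ls, hls1, ?_, ?_, ?_, ?_⟩
  · rw [xi_eq_phi hls1, hlseq, zero_mul]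
  · intro lam hmem hxi
    have hphi : phi lam = 0 := by
      have heq := xi_eq_phi hmem
      rw [hxi] at heq
      exact (mul_eq_zero.mp heq.symm).resolve_right (pos_factor hmem).ne'
    rcases lt_trichotomy lam ls with h|h|h
    · exfalso
      have h2 := phi_strictMonoOn lam ls hmem.1 h hls1.2
      rw [hphi, hlseq] at h2
      exact lt_irrefl 0 h2
    · exact h
    · exfalso
      have h2 := phi_strictMonoOn ls lam hls1.1 h hmem.2
      rw [hphi, hlseq] at h2
      exact lt_irrefl 0 h2
  · intro lam h0 hlt
    have hmem : lam ∈ Ioc (0:ℝ) 1 := ⟨h0, le_trans hlt.le hls1.2⟩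
    have h2 := phi_strictMonoOn lam ls h0 hlt hls1.2
    rw [hlseq] at h2
    rw [xi_eq_phi hmem]
    exact mul_neg_of_neg_of_pos h2 (pos_factor hmem)
  · intro lam hlt hle
    have hmem : lam ∈ Ioc (0:ℝ) 1 := ⟨lt_trans hls1.1 hlt, hle⟩
    have h2 := phi_strictMonoOn ls lam hls1.1 hlt hle
    rw [hlseq] at h2
    rw [xi_eq_phi hmem]
    exact mul_pos h2 (pos_factor hmem)
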